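/- Preferential reconstruction of dependence logic entailment: let W_sup = (S, ℓ, ≺_sup) be the preferential model for PDL whose states are all nonempty teams over the finite set N, ℓ the identity, and Y ≺_sup X iff X ⊊ Y. Then for all PDL-formulas φ, ψ: φ ⊢_{W_sup} ψ if and only if every team X over N with X ⊨ φ satisfies X ⊨ ψ. -/

import Mathlib

/-- PDL-formulas in negation normal form over variables `V`,
including dependence atoms `dep [a₁,…,a_k] b`. -/
inductive PDL (V : Type) : Type
  | pos : V → PDL V
  | neg : V → PDL V
  | bot : PDL V
  | top : PDL V
  | dep : List V → V → PDL V
  | conj : PDL V → PDL V → PDL V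
  | disj : PDL V → PDL V → PDL V

/-- Team semantics of PDL-formulas. -/
def PDL.tsat {V : Type} : PDL V → Set (V → Bool) → Prop
  | .pos p, X => ∀ v ∈ X, v p = true
  | .neg p, X => ∀ v ∈ X, v p = false
  | .bot, X => X = ∅
  | .top, _ => True
  | .dep as b, X => ∀ v ∈ X, ∀ v' ∈ X, (∀ a ∈ as, v a = v' a) → v b = v' b
  | .conj φ ψ, X => PDL.tsat φ X ∧ PDL.tsat ψ X
  | .disj φ ψ, X => ∃ Y Z : Set (V → Bool), X = Y ∪ Z ∧ PDL.tsat φ Y ∧ PDL.tsat ψ Z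

/-- Preferential entailment `φ ⊢_{W_sup} ψ` for the preferential model
`W_sup` whose states are all nonempty teams, labelled by themselves, with
`Y ≺_sup X` iff `X ⊊ Y`: every nonempty team satisfying `φ` that has no
nonempty proper superteam satisfying `φ` must satisfy `ψ`. -/
def entSup {V : Type} (φ ψ : PDL V) : Prop :=
  ∀ X : Set (V → Bool), X.Nonempty → PDL.tsat φ X →
    (∀ Y : Set (V → Bool), Y.Nonempty → PDL.tsat φ Y → ¬ X ⊂ Y) →
    PDL.tsat ψ X

lemma PDL.tsat_empty {V : Type} (φ : PDL V) : PDL.tsat φ (∅ : Set (V → Bool)) := by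
  induction φ with
  | pos p => intro v hv; exact absurd hv (Set.notMem_empty v)
  | neg p => intro v hv; exact absurd hv (Set.notMem_empty v)
  | bot => rfl
  | top => trivial
  | dep as b => intro v hv; exact absurd hv (Set.notMem_empty v)
  | conj φ ψ ihφ ihψ => exact ⟨ihφ, ihψ⟩
  | disj φ ψ ihφ ihψ => exact ⟨∅, ∅, by simp, ihφ, ihψ⟩

lemma PDL.tsat_mono {V : Type} (φ : PDL V) :
    ∀ X Y : Set (V → Bool), Y ⊆ X → PDL.tsat φ X → PDL.tsat φ Y := by
  induction φ with
  | pos p => intro X Y hYX h v hv; exact h v (hYX hv)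
  | neg p => intro X Y hYX h v hv; exact h v (hYX hv)
  | bot => intro X Y hYX h; subst h; exact Set.subset_eq_empty hYX rfl
  | top => intro _ _ _ _; trivial
  | dep as b => intro X Y hYX h v hv v' hv' hag; exact h v (hYX hv) v' (hYX hv') hag
  | conj φ ψ ihφ ihψ =>
      intro X Y hYX h; exact ⟨ihφ X Y hYX h.1, ihψ X Y hYX h.2⟩
  | disj φ ψ ihφ ihψ =>
      intro X Y hYX h
      obtain ⟨A, B, hX, hA, hB⟩ := h
      refine ⟨Y ∩ A, Y ∩ B, ?_, ihφ A (Y ∩ A) Set.inter_subset_right hA,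
        ihψ B (Y ∩ B) Set.inter_subset_right hB⟩
      rw [← Set.inter_union_distrib_left]
      exact (Set.inter_eq_left.2 (hX ▸ hYX)).symm

/-- Preferential reconstruction of dependence logic entailment:
`φ ⊢_{W_sup} ψ` iff `φ ⊨ ψ` in team semantics. -/
theorem entSup_iff_team_entailment {V : Type} [Fintype V] [Nonempty V]
    (φ ψ : PDL V) :
    entSup φ ψ ↔ ∀ X : Set (V → Bool), PDL.tsat φ X → PDL.tsat ψ X := by
  constructor
  · intro h X hφX
    rcases Set.eq_empty_or_nonempty X with rfl | hXne
    · exact PDL.tsat_empty ψ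
    · -- find a maximal superteam of X satisfying φ
      set S : Set (Set (V → Bool)) := {Y | X ⊆ Y ∧ PDL.tsat φ Y} with hS
      have hXS : X ∈ S := ⟨le_refl _, hφX⟩
      have hfin : S.Finite := Set.toFinite S
      obtain ⟨Y, hYS, hmax⟩ := Set.Finite.exists_maximalFor id S hfin ⟨X, hXS⟩
      have hYne : Y.Nonempty := hXne.mono hYS.1
      have hψY : PDL.tsat ψ Y := by
        apply h Y hYne hYS.2
        intro Z hZne hφZ hYZ
        have hZS : Z ∈ S := ⟨hYS.1.trans hYZ.1, hφZ⟩
        have : Y = Z := le_antisymm hYZ.1 (hmax hZS hYZ.1)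
        exact hYZ.2 (this ▸ le_refl _)
      exact PDL.tsat_mono ψ Y X hYS.1 hψY
  · intro h X _ hφX _
    exact h X hφX
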